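/- Let q ≥ 2, t ∈ ℝⁿ_{≥0}, y ∈ ℝⁿ, and let T be the diagonal n×n matrix with T_{ii} = t_i^{(q−2)/2}. Then ‖Ty‖₂² + ‖y‖_q^q ≤ 2·Σ_{i∈[n]} γ_q(t_i, y_i) ≤ q·( ‖Ty‖₂² + ‖y‖_q^q ). -/
import Mathlib


open Matrix Finset

/-- The smoothed `q`-norm function `γ_q(t,y)`. -/
noncomputable def gammaFn (q t y : ℝ) : ℝ :=
  if |y| ≤ t then (q / 2) * t ^ (q - 2) * y ^ 2
  else |y| ^ q + (q / 2 - 1) * t ^ q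

lemma gamma_key (q t y : ℝ) (hq : 2 ≤ q) (ht : 0 ≤ t) :
    t ^ (q - 2) * y ^ 2 + |y| ^ q ≤ 2 * gammaFn q t y ∧
      2 * gammaFn q t y ≤ q * (t ^ (q - 2) * y ^ 2 + |y| ^ q) := by
  have hA : (0:ℝ) ≤ t ^ (q - 2) * y ^ 2 := by positivity
  have hB : (0:ℝ) ≤ |y| ^ q := Real.rpow_nonneg (abs_nonneg y) q
  have hy2 : |y| ^ (2:ℝ) = y ^ 2 := by
    rw [show ((2:ℝ)) = ((2:ℕ):ℝ) by norm_num, Real.rpow_natCast, sq_abs]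
  unfold gammaFn
  by_cases h : |y| ≤ t
  · rw [if_pos h]
    have hBA : |y| ^ q ≤ t ^ (q - 2) * y ^ 2 := by
      rcases eq_or_lt_of_le (abs_nonneg y) with h0 | h0
      · rw [← h0, Real.zero_rpow (by linarith)]; exact hA
      · have : |y| ^ q = |y| ^ (q - 2) * |y| ^ (2:ℝ) := by
          rw [← Real.rpow_add h0]; ring_nf
        rw [this, hy2]
        have := Real.rpow_le_rpow (abs_nonneg y) h (by linarith : (0:ℝ) ≤ q - 2)
        nlinarith [sq_nonneg y]
    constructor
    · nlinarith
    · nlinarith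
  · rw [if_neg h]
    push_neg at h
    have hy0 : (0:ℝ) < |y| := lt_of_le_of_lt ht h
    have hAB : t ^ (q - 2) * y ^ 2 ≤ |y| ^ q := by
      have : |y| ^ q = |y| ^ (q - 2) * |y| ^ (2:ℝ) := by
        rw [← Real.rpow_add hy0]; ring_nf
      rw [this, hy2]
      have := Real.rpow_le_rpow ht h.le (by linarith : (0:ℝ) ≤ q - 2)
      nlinarith [sq_nonneg y]
    have htq : t ^ q ≤ |y| ^ q := Real.rpow_le_rpow ht h.le (by linarith)
    have htq0 : (0:ℝ) ≤ t ^ q := Real.rpow_nonneg ht q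
    constructor
    · nlinarith
    · nlinarith

/-- for `q ≥ 2`, `t ≥ 0`, and `T = diag(t_i^{(q−2)/2})`:
`‖Ty‖₂² + ‖y‖_q^q ≤ 2 Σ_i γ_q(t_i, y_i) ≤ q(‖Ty‖₂² + ‖y‖_q^q)`. -/
theorem stmt12 (n : ℕ) (q : ℝ) (hq : 2 ≤ q)
    (t y : Fin n → ℝ) (ht : ∀ i, 0 ≤ t i) :
    (∑ i, ((Matrix.diagonal (fun i => t i ^ ((q - 2) / 2))).mulVec y) i ^ 2)
        + (∑ i, |y i| ^ q) ≤ 2 * ∑ i, gammaFn q (t i) (y i) ∧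
      2 * ∑ i, gammaFn q (t i) (y i)
        ≤ q * ((∑ i, ((Matrix.diagonal (fun i => t i ^ ((q - 2) / 2))).mulVec y) i ^ 2)
            + (∑ i, |y i| ^ q)) := by
  have hA : ∀ i, ((Matrix.diagonal (fun i => t i ^ ((q - 2) / 2))).mulVec y) i ^ 2
      = t i ^ (q - 2) * y i ^ 2 := by
    intro i
    rw [Matrix.mulVec_diagonal, mul_pow]
    congr 1
    rw [show (t i ^ ((q - 2) / 2)) ^ 2 = (t i ^ ((q - 2) / 2)) ^ ((2:ℕ):ℝ) from
      (Real.rpow_natCast _ 2).symm, ← Real.rpow_mul (ht i)]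
    norm_num
  simp only [hA]
  have key := fun i => gamma_key q (t i) (y i) hq (ht i)
  constructor
  · rw [← Finset.sum_add_distrib, Finset.mul_sum]
    exact Finset.sum_le_sum fun i _ => (key i).1
  · rw [← Finset.sum_add_distrib, Finset.mul_sum, Finset.mul_sum]
    exact Finset.sum_le_sum fun i _ => (key i).2
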